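/- For every (k,k)-Dyck path π, dinv(π) = maxtdinv(π). Here dinv(π) is the number of pairs (e,f) where e is an east step of π, f is a north step of π strictly to the right of e, and some line of slope s_− = 1−ε (for sufficiently small ε > 0) intersects both e and f; and maxtdinv(π) is the number of attacking pairs of north steps of π, where north steps are ordered by the distance of their southern endpoints to the line y = s_−·x, and a north step z attacks exactly the north steps greater than z in this sweeping order but less than the north step directly above z's northern endpoint. -/
import Mathlib


noncomputable section

/- A `(k,k)`-Dyck path is encoded by the columns of its north steps: a
monotone function `c : Fin k → ℕ` with `c r ≤ r` (the north step in row `r`,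
0-based, goes from `(c r, r)` to `(c r, r+1)`).  East steps at height `b`
(`1 ≤ b ≤ k`) have left endpoints `(a, b)` for `cext (b-1) ≤ a < cext b`,
where `cext` extends `c` by `cext k = k`. -/

/-- Extension of the column function by `k` past the top. -/
def cext (k : ℕ) (c : Fin k → ℕ) (j : ℕ) : ℕ :=
  if h : j < k then c ⟨j, h⟩ else k

/-- `(a, b)` is the left endpoint of an east step of the path. -/
abbrev IsEast (k : ℕ) (c : Fin k → ℕ) (a b : ℕ) : Prop :=
  1 ≤ b ∧ b ≤ k ∧ cext k c (b - 1) ≤ a ∧ a < cext k c b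

/-- `dinv(π)`: the number of pairs `(e, f)` of an east step `e` with left
endpoint `(a, b)` and a north step `f` with bottom endpoint `(c r, r)`, with
`f` strictly to the right of `e` (`c r > a`), such that some line of slope
`1 - ε` (for all sufficiently small `ε > 0`) meets both steps.  Writing
`δ = c r - a ≥ 1` and `d = b - r` (an integer), this is equivalent to the
explicit condition `δ = 1 ∧ d = 0`, or `δ ≥ 2 ∧ d ∈ {1 - δ, 2 - δ}`. -/
def dinv (k : ℕ) (c : Fin k → ℕ) : ℕ :=
  (((Finset.range (k + 1) ×ˢ Finset.range (k + 1)) ×ˢ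
      (Finset.univ : Finset (Fin k))).filter fun q =>
    IsEast k c q.1.1 q.1.2 ∧ q.1.1 < c q.2 ∧
      ((c q.2 = q.1.1 + 1 ∧ q.1.2 = (q.2 : ℕ)) ∨
        (q.1.1 + 2 ≤ c q.2 ∧
          (q.1.2 + c q.2 = (q.2 : ℕ) + q.1.1 + 1 ∨
            q.1.2 + c q.2 = (q.2 : ℕ) + q.1.1 + 2)))).card

/-- The north step in row `z` (bottom endpoint `(c z, z)`) attacks the north
step in row `z'` (bottom endpoint `(c z', z')`): ordering north steps by the
distance of their southern endpoints to the line `y = (1-ε)x`, `z` attacks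
exactly the north steps greater than `z` in this sweeping order but less than
the north step directly above `z`'s northern endpoint.  Explicitly:
either `z'` is on the same diagonal with a larger column
(`z' - c z' = z - c z` and `c z' > c z`), or on the next diagonal with a
smaller column (`z' - c z' = z - c z + 1` and `c z' < c z`). -/
abbrev Attacks (k : ℕ) (c : Fin k → ℕ) (z z' : Fin k) : Prop :=
  (c z < c z' ∧ (z' : ℕ) + c z = (z : ℕ) + c z') ∨
    (c z' < c z ∧ (z' : ℕ) + c z = (z : ℕ) + c z' + 1)

/-- `maxtdinv(π)`: the number of attacking pairs of north steps. -/
def maxtdinv (k : ℕ) (c : Fin k → ℕ) : ℕ :=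
  ((Finset.univ : Finset (Fin k × Fin k)).filter fun p =>
    Attacks k c p.1 p.2).card

namespace DinvAux

/-- The (extended) diagonal of the north step in row `i`. -/
def dg (k : ℕ) (c : Fin k → ℕ) (i : ℕ) : ℕ := i - cext k c i

lemma ce_le {k : ℕ} (c : Fin k → ℕ) (hdiag : ∀ r : Fin k, c r ≤ (r : ℕ)) (j : ℕ) :
    cext k c j ≤ j := by
  unfold cext; split
  · exact hdiag _
  · omega

lemma ce_eq {k : ℕ} (c : Fin k → ℕ) {j : ℕ} (h : j < k) : cext k c j = c ⟨j, h⟩ :=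
  dif_pos h

lemma ce_mono_succ {k : ℕ} (c : Fin k → ℕ) (hmono : Monotone c)
    (hdiag : ∀ r : Fin k, c r ≤ (r : ℕ)) (j : ℕ) :
    cext k c j ≤ cext k c (j + 1) := by
  by_cases h1 : j + 1 < k
  · rw [ce_eq c (by omega : j < k), ce_eq c h1]
    exact hmono (by simp [Fin.le_def])
  · by_cases h2 : j < k
    · have h3 : c ⟨j, h2⟩ ≤ j := hdiag ⟨j, h2⟩
      rw [ce_eq c h2]
      unfold cext
      rw [dif_neg h1]
      omega
    · unfold cext
      rw [dif_neg h1, dif_neg h2]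

lemma dg_zero {k : ℕ} (c : Fin k → ℕ) : dg k c 0 = 0 := by
  unfold dg; omega

lemma dg_step {k : ℕ} (c : Fin k → ℕ) (hmono : Monotone c)
    (hdiag : ∀ r : Fin k, c r ≤ (r : ℕ)) (i : ℕ) :
    dg k c (i + 1) ≤ dg k c i + 1 := by
  have h1 := ce_le c hdiag i
  have h2 := ce_mono_succ c hmono hdiag i
  unfold dg
  omega

/-- The crossing lemma: the number of "up-crossings" at level `t` before `M`
equals the number of "down-crossings" plus a boundary indicator. -/
lemma cross (d : ℕ → ℕ) (h0 : d 0 = 0) (hstep : ∀ i, d (i + 1) ≤ d i + 1) (t M : ℕ) :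
    ((Finset.range M).filter fun i => d i = t).card
      = ((Finset.range M).filter fun i => t ≤ d i ∧ d (i + 1) ≤ t).card
        + (if t < d M then 1 else 0) := by
  induction M with
  | zero => simp [h0]
  | succ M ih =>
      have LH : ((Finset.range (M + 1)).filter fun i => d i = t).card
          = ((Finset.range M).filter fun i => d i = t).card
            + (if d M = t then 1 else 0) := by
        rw [Finset.card_filter, Finset.sum_range_succ, ← Finset.card_filter]
      have RH : ((Finset.range (M + 1)).filter fun i => t ≤ d i ∧ d (i + 1) ≤ t).card
          = ((Finset.range M).filter fun i => t ≤ d i ∧ d (i + 1) ≤ t).card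
            + (if t ≤ d M ∧ d (M + 1) ≤ t then 1 else 0) := by
        rw [Finset.card_filter, Finset.sum_range_succ, ← Finset.card_filter]
      rw [LH, RH, ih]
      have := hstep M
      split_ifs <;> omega

lemma card_filter_iff {α : Type*} (s : Finset α) (p q : α → Prop)
    [DecidablePred p] [DecidablePred q] (h : ∀ a ∈ s, p a ↔ q a) :
    (s.filter p).card = (s.filter q).card := by
  rw [Finset.card_filter, Finset.card_filter]
  exact Finset.sum_congr rfl fun a ha => if_congr (h a ha) rfl rfl

lemma card_filter_prod_r {α β : Type*} (s : Finset α) (t : Finset β)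
    (P : α × β → Prop) [DecidablePred P] :
    ((s ×ˢ t).filter P).card = ∑ b ∈ t, (s.filter fun a => P (a, b)).card := by
  rw [Finset.card_filter, Finset.sum_product_right]
  exact Finset.sum_congr rfl fun b _ => (Finset.card_filter _ _).symm

lemma card_filter_prod_l {α β : Type*} (s : Finset α) (t : Finset β)
    (P : α × β → Prop) [DecidablePred P] :
    ((s ×ˢ t).filter P).card = ∑ a ∈ s, (t.filter fun b => P (a, b)).card := by
  rw [Finset.card_filter, Finset.sum_product]
  exact Finset.sum_congr rfl fun a _ => (Finset.card_filter _ _).symm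

/-- Counting east steps at slope-level `sl` with bounded column. -/
lemma east_count {k : ℕ} (c : Fin k → ℕ) (hdiag : ∀ r : Fin k, c r ≤ (r : ℕ))
    (sl M : ℕ) (hMk : M ≤ k) :
    (((Finset.range (k + 1) ×ˢ Finset.range (k + 1)).filter
        fun e => IsEast k c e.1 e.2 ∧ e.2 = e.1 + sl + 1 ∧ e.1 + sl < M)).card
      = ((Finset.range M).filter fun i => sl ≤ dg k c i ∧ dg k c (i + 1) ≤ sl).card := by
  apply Finset.card_bij' (fun e _ => e.1 + sl) (fun i _ => (i - sl, i + 1))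
  · rintro ⟨a, b⟩ hab
    simp only [Finset.mem_filter, Finset.mem_product, Finset.mem_range] at hab ⊢
    obtain ⟨⟨ha, hb⟩, ⟨h1, h2, h3, h4⟩, h5, h6⟩ := hab
    have e1 := ce_le c hdiag (a + sl)
    have e2 := ce_le c hdiag (a + sl + 1)
    have hb1 : b - 1 = a + sl := by omega
    rw [hb1] at h3
    rw [h5] at h4
    unfold dg
    omega
  · intro i hi
    simp only [Finset.mem_filter, Finset.mem_range, Finset.mem_product] at hi ⊢
    obtain ⟨hiM, hd1, hd2⟩ := hi
    have e1 := ce_le c hdiag i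
    have e2 := ce_le c hdiag (i + 1)
    unfold dg at hd1 hd2
    have hsli : sl ≤ i := by omega
    refine ⟨⟨by omega, by omega⟩, ⟨by omega, by omega, ?_, ?_⟩, by omega, by omega⟩
    · have h7 : i + 1 - 1 = i := by omega
      rw [h7]; omega
    · omega
  · rintro ⟨a, b⟩ hab
    simp only [Finset.mem_filter, Finset.mem_product, Finset.mem_range] at hab
    obtain ⟨-, -, h5, -⟩ := hab
    simp only [Prod.mk.injEq]
    constructor <;> omega
  · intro i hi
    simp only [Finset.mem_filter, Finset.mem_range] at hi
    unfold dg at hi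
    have e1 := ce_le c hdiag i
    simp only []
    omega

/-- Counting north steps on diagonal `sl` with bounded row. -/
lemma north_count {k : ℕ} (c : Fin k → ℕ) (hdiag : ∀ r : Fin k, c r ≤ (r : ℕ))
    (sl M : ℕ) (hMk : M ≤ k) :
    ((Finset.univ : Finset (Fin k)).filter
        fun z : Fin k => (z : ℕ) = c z + sl ∧ (z : ℕ) < M).card
      = ((Finset.range M).filter fun i => dg k c i = sl).card := by
  refine Finset.card_bij (fun z _ => (z : ℕ)) ?hi ?inj ?surj
  case hi =>
    intro z hz
    simp only [Finset.mem_filter, Finset.mem_univ, true_and] at hz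
    simp only [Finset.mem_filter, Finset.mem_range]
    unfold dg
    rw [ce_eq c z.isLt]
    simp only [Fin.eta]
    omega
  case inj =>
    intro a _ b _ h
    exact Fin.val_injective h
  case surj =>
    intro i hi
    simp only [Finset.mem_filter, Finset.mem_range] at hi
    obtain ⟨hiM, hd⟩ := hi
    have hik : i < k := by omega
    unfold dg at hd
    rw [ce_eq c hik] at hd
    have h2 := hdiag ⟨i, hik⟩
    refine ⟨⟨i, hik⟩, ?_, rfl⟩
    simp only [Finset.mem_filter, Finset.mem_univ, true_and, Fin.val_mk]
    simp only [Fin.val_mk] at h2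
    omega

end DinvAux

theorem dinv_eq_maxtdinv (k : ℕ) (c : Fin k → ℕ) (hmono : Monotone c)
    (hdiag : ∀ r : Fin k, c r ≤ (r : ℕ)) :
    dinv k c = maxtdinv k c := by
  classical
  have h0 := DinvAux.dg_zero c
  have hstep := DinvAux.dg_step c hmono hdiag
  -- the first kind of pairs, for a fixed north step `r`
  have key1 : ∀ r : Fin k,
      (((Finset.range (k + 1) ×ˢ Finset.range (k + 1)).filter
          fun e : ℕ × ℕ => IsEast k c e.1 e.2 ∧ e.1 < c r ∧
            e.2 + c r = (r : ℕ) + e.1 + 1)).card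
      = ((Finset.univ : Finset (Fin k)).filter
          fun z : Fin k => c z < c r ∧ (r : ℕ) + c z = (z : ℕ) + c r).card := by
    intro r
    have hcr := hdiag r
    set D := (r : ℕ) - c r with hDdef
    have hD : c r + D = (r : ℕ) := by omega
    have hdgr : DinvAux.dg k c (r : ℕ) = D := by
      unfold DinvAux.dg
      rw [DinvAux.ce_eq c r.isLt, Fin.eta]
    have hrk : (r : ℕ) ≤ k := le_of_lt r.isLt
    have hc := DinvAux.cross (DinvAux.dg k c) h0 hstep D (r : ℕ)
    rw [hdgr] at hc
    simp only [lt_self_iff_false, if_false, add_zero] at hc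
    calc (((Finset.range (k + 1) ×ˢ Finset.range (k + 1)).filter
          fun e : ℕ × ℕ => IsEast k c e.1 e.2 ∧ e.1 < c r ∧
            e.2 + c r = (r : ℕ) + e.1 + 1)).card
        = (((Finset.range (k + 1) ×ˢ Finset.range (k + 1)).filter
          fun e : ℕ × ℕ => IsEast k c e.1 e.2 ∧ e.2 = e.1 + D + 1 ∧
            e.1 + D < (r : ℕ))).card :=
          DinvAux.card_filter_iff _ _ _
            (fun e _ => and_congr_right fun _ => by omega)
      _ = ((Finset.range (r : ℕ)).filter
            fun i => D ≤ DinvAux.dg k c i ∧ DinvAux.dg k c (i + 1) ≤ D).card :=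
          DinvAux.east_count c hdiag D (r : ℕ) hrk
      _ = ((Finset.range (r : ℕ)).filter fun i => DinvAux.dg k c i = D).card :=
          hc.symm
      _ = ((Finset.univ : Finset (Fin k)).filter
            fun z : Fin k => (z : ℕ) = c z + D ∧ (z : ℕ) < (r : ℕ)).card :=
          (DinvAux.north_count c hdiag D (r : ℕ) hrk).symm
      _ = ((Finset.univ : Finset (Fin k)).filter
          fun z : Fin k => c z < c r ∧ (r : ℕ) + c z = (z : ℕ) + c r).card :=
          DinvAux.card_filter_iff _ _ _ (fun z _ => by omega)
  -- the second kind of pairs, for a fixed north step `r`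
  have key2 : ∀ r : Fin k,
      (((Finset.range (k + 1) ×ˢ Finset.range (k + 1)).filter
          fun e : ℕ × ℕ => IsEast k c e.1 e.2 ∧ e.1 + 2 ≤ c r ∧
            e.2 + c r = (r : ℕ) + e.1 + 2)).card
      = ((Finset.univ : Finset (Fin k)).filter
          fun z : Fin k => c z < c r ∧ (z : ℕ) + c r = (r : ℕ) + c z + 1).card := by
    intro r
    have hcr := hdiag r
    set D := (r : ℕ) - c r with hDdef
    have hD : c r + D = (r : ℕ) := by omega
    have hdgr : DinvAux.dg k c (r : ℕ) = D := by
      unfold DinvAux.dg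
      rw [DinvAux.ce_eq c r.isLt, Fin.eta]
    have hrk : (r : ℕ) ≤ k := le_of_lt r.isLt
    have hrk1 : (r : ℕ) + 1 ≤ k := r.isLt
    have hc := DinvAux.cross (DinvAux.dg k c) h0 hstep (D + 1) ((r : ℕ) + 1)
    have hno : ¬ (D + 1 < DinvAux.dg k c ((r : ℕ) + 1)) := by
      have h1 := hstep (r : ℕ)
      rw [hdgr] at h1
      omega
    rw [if_neg hno, add_zero] at hc
    have hext : ((Finset.range ((r : ℕ) + 1)).filter
          fun i => D + 1 ≤ DinvAux.dg k c i ∧ DinvAux.dg k c (i + 1) ≤ D + 1)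
        = ((Finset.range (r : ℕ)).filter
          fun i => D + 1 ≤ DinvAux.dg k c i ∧ DinvAux.dg k c (i + 1) ≤ D + 1) := by
      rw [Finset.range_add_one, Finset.filter_insert, if_neg]
      rw [hdgr]
      omega
    calc (((Finset.range (k + 1) ×ˢ Finset.range (k + 1)).filter
          fun e : ℕ × ℕ => IsEast k c e.1 e.2 ∧ e.1 + 2 ≤ c r ∧
            e.2 + c r = (r : ℕ) + e.1 + 2)).card
        = (((Finset.range (k + 1) ×ˢ Finset.range (k + 1)).filter
          fun e : ℕ × ℕ => IsEast k c e.1 e.2 ∧ e.2 = e.1 + (D + 1) + 1 ∧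
            e.1 + (D + 1) < (r : ℕ))).card :=
          DinvAux.card_filter_iff _ _ _
            (fun e _ => and_congr_right fun _ => by omega)
      _ = ((Finset.range (r : ℕ)).filter
            fun i => D + 1 ≤ DinvAux.dg k c i ∧ DinvAux.dg k c (i + 1) ≤ D + 1).card :=
          DinvAux.east_count c hdiag (D + 1) (r : ℕ) hrk
      _ = ((Finset.range ((r : ℕ) + 1)).filter
            fun i => D + 1 ≤ DinvAux.dg k c i ∧ DinvAux.dg k c (i + 1) ≤ D + 1).card := by
          rw [hext]
      _ = ((Finset.range ((r : ℕ) + 1)).filter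
            fun i => DinvAux.dg k c i = D + 1).card := hc.symm
      _ = ((Finset.univ : Finset (Fin k)).filter
            fun z : Fin k => (z : ℕ) = c z + (D + 1) ∧ (z : ℕ) < (r : ℕ) + 1).card :=
          (DinvAux.north_count c hdiag (D + 1) ((r : ℕ) + 1) hrk1).symm
      _ = ((Finset.univ : Finset (Fin k)).filter
          fun z : Fin k => c z < c r ∧ (z : ℕ) + c r = (r : ℕ) + c z + 1).card :=
          DinvAux.card_filter_iff _ _ _ (fun z _ => by omega)
  -- splitting the inner `dinv` count for a fixed north step `r`
  have split : ∀ r : Fin k,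
      (((Finset.range (k + 1) ×ˢ Finset.range (k + 1)).filter
          fun e : ℕ × ℕ => IsEast k c e.1 e.2 ∧ e.1 < c r ∧
            ((c r = e.1 + 1 ∧ e.2 = (r : ℕ)) ∨
              (e.1 + 2 ≤ c r ∧
                (e.2 + c r = (r : ℕ) + e.1 + 1 ∨
                  e.2 + c r = (r : ℕ) + e.1 + 2))))).card
      = (((Finset.range (k + 1) ×ˢ Finset.range (k + 1)).filter
          fun e : ℕ × ℕ => IsEast k c e.1 e.2 ∧ e.1 < c r ∧
            e.2 + c r = (r : ℕ) + e.1 + 1)).card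
        + (((Finset.range (k + 1) ×ˢ Finset.range (k + 1)).filter
          fun e : ℕ × ℕ => IsEast k c e.1 e.2 ∧ e.1 + 2 ≤ c r ∧
            e.2 + c r = (r : ℕ) + e.1 + 2)).card := by
    intro r
    rw [Finset.card_filter, Finset.card_filter, Finset.card_filter,
      ← Finset.sum_add_distrib]
    refine Finset.sum_congr rfl fun e _ => ?_
    simp only [ite_and]
    split_ifs <;> omega
  -- splitting `maxtdinv` into the two kinds of attacking pairs
  have msplit : maxtdinv k c
      = (∑ r : Fin k, ((Finset.univ : Finset (Fin k)).filter
          fun z : Fin k => c z < c r ∧ (r : ℕ) + c z = (z : ℕ) + c r).card)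
        + (∑ r : Fin k, ((Finset.univ : Finset (Fin k)).filter
          fun z : Fin k => c z < c r ∧ (z : ℕ) + c r = (r : ℕ) + c z + 1).card) := by
    have step1 : maxtdinv k c
        = (((Finset.univ : Finset (Fin k)) ×ˢ (Finset.univ : Finset (Fin k))).filter
            fun p : Fin k × Fin k =>
              c p.1 < c p.2 ∧ (p.2 : ℕ) + c p.1 = (p.1 : ℕ) + c p.2).card
          + (((Finset.univ : Finset (Fin k)) ×ˢ (Finset.univ : Finset (Fin k))).filter
            fun p : Fin k × Fin k =>
              c p.2 < c p.1 ∧ (p.2 : ℕ) + c p.1 = (p.1 : ℕ) + c p.2 + 1).card := by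
      unfold maxtdinv
      rw [← Finset.univ_product_univ]
      rw [Finset.card_filter, Finset.card_filter, Finset.card_filter,
        ← Finset.sum_add_distrib]
      refine Finset.sum_congr rfl fun p _ => ?_
      unfold Attacks
      split_ifs <;> omega
    rw [step1, DinvAux.card_filter_prod_r, DinvAux.card_filter_prod_l]
  -- put everything together
  unfold dinv
  rw [DinvAux.card_filter_prod_r, msplit, ← Finset.sum_add_distrib]
  exact Finset.sum_congr rfl fun r _ =>
    (split r).trans (by rw [key1 r, key2 r])

end
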